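/- Let Γ be a finite tree on a vertex set V, let w : V → ℤ, and let A be the symmetric V×V rational matrix with A(v,v) = w(v), A(u,v) = 1 when u and v are adjacent in Γ, and A(u,v) = 0 otherwise. Let τ_i, τ_j ∈ V, let b_i, b_j : V → ℚ be functions with b_i(α) ≥ 0 for all α and b_i(α) > 0 exactly when α = τ_i, and b_j(α) ≥ 0 with b_j(α) > 0 exactly when α = τ_j. Suppose m_i, m_j : V → ℚ take only positive values and satisfy, for every α ∈ V, b_i(α) + Σ_{β∈V} A(α,β)·m_i(β) = 0 and b_j(α) + Σ_{β∈V} A(α,β)·m_j(β) = 0. Define q(α) = m_j(α)/m_i(α). Then: (1) q is strictly decreasing along the unique path in Γ from τ_j to τ_i, i.e., if α comes strictly before β on this path then q(α) > q(β); and (2) for every connected component Δ of the graph obtained from Γ by deleting all vertices of this path, q is constant on Δ ∪ {ρ_Δ}, where ρ_Δ is the unique vertex of the path adjacent to some vertex of Δ. -/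

import Mathlib

open Finset in
lemma stmt7_sum_core {V : Type*} [Fintype V] [DecidableEq V]
    (A : Matrix V V ℚ) (hsymm : ∀ p r : V, A p r = A r p)
    (x y bx byy : V → ℚ)
    (hx : ∀ α, bx α + ∑ β, A α β * x β = 0)
    (hy : ∀ α, byy α + ∑ β, A α β * y β = 0)
    (S : Finset V) (u v : V) (hu : u ∈ S) (hv : v ∉ S)
    (hcut : ∀ α ∈ S, ∀ β ∉ S, A α β ≠ 0 → α = u ∧ β = v) :
    ∑ α ∈ S, (x α * byy α - y α * bx α)
      = A u v * (y u * x v - x u * y v) := by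
  classical
  set F : V → V → ℚ := fun a b => A a b * (y a * x b - x a * y b) with hF
  have h1 : ∀ α, x α * byy α - y α * bx α = ∑ β, F α β := by
    intro α
    have hbx : bx α = -∑ β, A α β * x β := by linarith [hx α]
    have hby : byy α = -∑ β, A α β * y β := by linarith [hy α]
    have hsplit : ∑ β, F α β
        = y α * (∑ β, A α β * x β) - x α * (∑ β, A α β * y β) := by
      rw [Finset.mul_sum, Finset.mul_sum, ← Finset.sum_sub_distrib]
      exact Finset.sum_congr rfl fun β _ => by simp [hF]; ring
    rw [hsplit, hbx, hby]; ring
  calc ∑ α ∈ S, (x α * byy α - y α * bx α)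
      = ∑ α ∈ S, ∑ β, F α β := Finset.sum_congr rfl fun α _ => h1 α
    _ = ∑ α ∈ S, ((∑ β ∈ S, F α β) + ∑ β ∈ Sᶜ, F α β) := by
        exact Finset.sum_congr rfl fun α _ => (Finset.sum_add_sum_compl S _).symm
    _ = (∑ α ∈ S, ∑ β ∈ S, F α β) + ∑ α ∈ S, ∑ β ∈ Sᶜ, F α β := by
        rw [Finset.sum_add_distrib]
    _ = 0 + ∑ α ∈ S, ∑ β ∈ Sᶜ, F α β := by
        congr 1
        have hanti : ∀ a b, F a b = - F b a := by
          intro a b; simp only [hF, hsymm a b]; ring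
        have hcomm : (∑ α ∈ S, ∑ β ∈ S, F α β)
            = ∑ α ∈ S, ∑ β ∈ S, F β α := Finset.sum_comm
        have : (∑ α ∈ S, ∑ β ∈ S, F α β)
            = - ∑ α ∈ S, ∑ β ∈ S, F α β := by
          nth_rewrite 1 [hcomm]
          rw [← Finset.sum_neg_distrib]
          · exact Finset.sum_congr rfl fun α _ => by
              rw [← Finset.sum_neg_distrib]
              exact Finset.sum_congr rfl fun β _ => (hanti β α)
        linarith
    _ = F u v := by
        rw [zero_add]
        rw [Finset.sum_eq_single_of_mem u hu]
        · rw [Finset.sum_eq_single_of_mem v (Finset.mem_compl.mpr hv)]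
          intro b hb hbv
          have : A u b = 0 := by
            by_contra hne
            exact hbv (hcut u hu b (Finset.mem_compl.mp hb) hne).2
          simp [hF, this]
        · intro b hb hbu
          apply Finset.sum_eq_zero
          intro β hβ
          have : A b β = 0 := by
            by_contra hne
            exact hbu (hcut b hb β (Finset.mem_compl.mp hβ) hne).1
          simp [hF, this]
    _ = A u v * (y u * x v - x u * y v) := rfl

open SimpleGraph in
lemma stmt7_reach_del {V : Type*} {G : SimpleGraph V} {v : V} :
    ∀ {a u : V} (_W : G.Walk a u),
    (G.deleteEdges {s(u, v)}).Reachable a u ∨ (G.deleteEdges {s(u, v)}).Reachable a v := by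
  intro a u W
  induction W with
  | nil => exact Or.inl (Reachable.refl _)
  | @cons a c u h W ih =>
    by_cases he : s(a, c) = s(u, v)
    · rcases Sym2.eq_iff.mp he with ⟨rfl, rfl⟩ | ⟨rfl, rfl⟩
      · exact Or.inl (Reachable.refl _)
      · exact Or.inr (Reachable.refl _)
    · have hadj : (G.deleteEdges {s(u, v)}).Adj a c := by
        simp only [SimpleGraph.deleteEdges_adj, Set.mem_singleton_iff]
        exact ⟨h, he⟩
      rcases ih with h' | h'
      · exact Or.inl (hadj.reachable.trans h')
      · exact Or.inr (hadj.reachable.trans h')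

open SimpleGraph in
lemma stmt7_chain_of_darts {V : Type*} {G : SimpleGraph V} {q : V → ℚ} :
    ∀ {a b : V} (p : G.Walk a b), (∀ d ∈ p.darts, q d.snd < q d.fst) →
      List.IsChain (fun x y => q y < q x) p.support := by
  intro a b p
  induction p with
  | nil => simp
  | @cons a c b h p ih =>
    intro hd
    rw [SimpleGraph.Walk.support_cons, p.support_eq_cons, List.isChain_cons_cons]
    constructor
    · exact hd ⟨(a, c), h⟩ (by simp [SimpleGraph.Walk.darts_cons])
    · rw [← p.support_eq_cons]
      exact ih fun d hdm => hd d (by simp [SimpleGraph.Walk.darts_cons, hdm])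


open SimpleGraph in
lemma stmt7_dart_rule {V : Type*} {G : SimpleGraph V} {q : V → ℚ} {τj τi : V}
    (ruleLt : ∀ u v : V, G.Adj u v →
      (G.deleteEdges {s(u, v)}).Reachable u τj →
      (G.deleteEdges {s(u, v)}).Reachable v τi → q v < q u) :
    ∀ (a : V) (W : G.Walk τj a) (Q : G.Walk a τi),
      (W.append Q).IsPath → ∀ d ∈ Q.darts, q d.snd < q d.fst := by
  intro a W Q
  induction Q with
  | nil =>
    intro _ d hd
    simp [SimpleGraph.Walk.darts_nil] at hd
  | @cons a c τi' h Q ih =>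
    intro hpath d hd
    have hdisj : ∀ x : V, x ∈ W.support → x ∈ Q.support → False := by
      have hnodup := hpath.support_nodup
      rw [SimpleGraph.Walk.support_append, SimpleGraph.Walk.support_cons,
        List.nodup_append] at hnodup
      intro x hx hx'
      exact hnodup.2.2 x hx x (by simpa using hx') rfl
    rw [SimpleGraph.Walk.darts_cons, List.mem_cons] at hd
    rcases hd with rfl | hd
    · apply ruleLt a c h
      · have hW : ∀ e ∈ W.edges, e ∉ ({s(a, c)} : Set (Sym2 V)) := by
          intro e he hm
          rw [Set.mem_singleton_iff] at hm
          subst hm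
          exact hdisj c (W.snd_mem_support_of_mem_edges he) Q.start_mem_support
        exact ⟨(W.toDeleteEdges {s(a, c)} hW).reverse⟩
      · have hQ : ∀ e ∈ Q.edges, e ∉ ({s(a, c)} : Set (Sym2 V)) := by
          intro e he hm
          rw [Set.mem_singleton_iff] at hm
          subst hm
          exact hdisj a W.end_mem_support (Q.fst_mem_support_of_mem_edges he)
        exact ⟨Q.toDeleteEdges {s(a, c)} hQ⟩
    · have hassoc : (W.concat h).append Q = W.append (SimpleGraph.Walk.cons h Q) := by
        rw [SimpleGraph.Walk.concat_eq_append, ← SimpleGraph.Walk.append_assoc,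
          SimpleGraph.Walk.cons_append, SimpleGraph.Walk.nil_append]
      exact ih ruleLt (W.concat h) (hassoc ▸ hpath) d hd

/-- Behaviour of the ratio `q = m_j / m_i` of multiplicities of two branches on
the dual tree `Γ` of a resolution: `q` is strictly decreasing along the geodesic
from `τ_j` to `τ_i`, and is constant on `Δ ∪ {ρ_Δ}` for every connected component
`Δ` of the complement of the geodesic, where `ρ_Δ` is the vertex of the geodesic
attached to `Δ`. -/
theorem stmt_7 (V : Type*) [Fintype V] [DecidableEq V]
    (G : SimpleGraph V) [DecidableRel G.Adj] (hG : G.IsTree)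
    (w : V → ℤ) (A : Matrix V V ℚ)
    (hA : ∀ u v : V, A u v =
      if u = v then (w u : ℚ) else if G.Adj u v then 1 else 0)
    (τi τj : V)
    (bi bj mi mj : V → ℚ)
    (hbi0 : ∀ α, 0 ≤ bi α) (hbi : ∀ α, 0 < bi α ↔ α = τi)
    (hbj0 : ∀ α, 0 ≤ bj α) (hbj : ∀ α, 0 < bj α ↔ α = τj)
    (hmi : ∀ α, 0 < mi α) (hmj : ∀ α, 0 < mj α)
    (heqi : ∀ α, bi α + ∑ β, A α β * mi β = 0)
    (heqj : ∀ α, bj α + ∑ β, A α β * mj β = 0)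
    (q : V → ℚ) (hq : ∀ α, q α = mj α / mi α)
    (P : G.Walk τj τi) (hP : P.IsPath) :
    (∀ α β : V, α ∈ P.support → β ∈ P.support →
        P.support.idxOf α < P.support.idxOf β → q β < q α) ∧
    (∀ (u v : V) (hu : u ∉ P.support) (hv : v ∉ P.support),
        (G.induce {x : V | x ∉ P.support}).Reachable ⟨u, hu⟩ ⟨v, hv⟩ →
          q u = q v) ∧
    (∀ (u v : V) (hu : u ∉ P.support) (hv : v ∉ P.support) (ρ : V),
        (G.induce {x : V | x ∉ P.support}).Reachable ⟨u, hu⟩ ⟨v, hv⟩ →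
        ρ ∈ P.support → G.Adj ρ v → q ρ = q u) := by
  classical
  -- basic facts about A
  have hAsymm : ∀ p r : V, A p r = A r p := by
    intro p r
    rw [hA p r, hA r p]
    rcases eq_or_ne p r with rfl | h
    · simp
    · simp [h, Ne.symm h, G.adj_comm p r]
  have hAadj : ∀ u v : V, G.Adj u v → A u v = 1 := by
    intro u v h
    rw [hA]; simp [h.ne, h]
  have hAne : ∀ u v : V, A u v ≠ 0 → u = v ∨ G.Adj u v := by
    intro u v h
    rw [hA] at h
    by_cases h1 : u = v
    · exact Or.inl h1
    · rw [if_neg h1] at h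
      by_cases h2 : G.Adj u v
      · exact Or.inr h2
      · rw [if_neg h2] at h; exact absurd rfl h
  -- vanishing of b away from τ
  have hbjz : ∀ α, α ≠ τj → bj α = 0 := by
    intro α hα
    rcases (hbj0 α).lt_or_eq with h | h
    · exact absurd ((hbj α).1 h) hα
    · exact h.symm
  have hbiz : ∀ α, α ≠ τi → bi α = 0 := by
    intro α hα
    rcases (hbi0 α).lt_or_eq with h | h
    · exact absurd ((hbi α).1 h) hα
    · exact h.symm
  -- bridges
  have bridge : ∀ u v : V, G.Adj u v → ¬ (G.deleteEdges {s(u, v)}).Reachable u v := by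
    intro u v huv
    exact (SimpleGraph.isBridge_iff.mp
      (SimpleGraph.isAcyclic_iff_forall_adj_isBridge.mp hG.IsAcyclic huv))
  -- the key identity for an edge
  have key : ∀ u v : V, G.Adj u v →
      mj u * mi v - mi u * mj v =
        (if (G.deleteEdges {s(u, v)}).Reachable u τj then mi τj * bj τj else 0)
        - (if (G.deleteEdges {s(u, v)}).Reachable u τi then mj τi * bi τi else 0) := by
    intro u v huv
    set G' := G.deleteEdges {s(u, v)} with hG'
    have hbridge : ¬ G'.Reachable u v := bridge u v huv
    set S : Finset V := Finset.univ.filter (fun α => G'.Reachable u α) with hS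
    have hmemS : ∀ α, α ∈ S ↔ G'.Reachable u α := by
      intro α; simp [hS]
    have huS : u ∈ S := (hmemS u).mpr (SimpleGraph.Reachable.refl _)
    have hvS : v ∉ S := fun h => hbridge ((hmemS v).mp h)
    have hcut : ∀ α ∈ S, ∀ β ∉ S, A α β ≠ 0 → α = u ∧ β = v := by
      intro α hα β hβ hAab
      rw [hmemS] at hα
      rcases hAne α β hAab with rfl | hadj
      · exact absurd ((hmemS α).mpr hα) hβ
      · by_cases he : s(α, β) = s(u, v)
        · rcases Sym2.eq_iff.mp he with ⟨rfl, rfl⟩ | ⟨rfl, rfl⟩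
          · exact ⟨rfl, rfl⟩
          · exact absurd hα hbridge
        · have hadj' : G'.Adj α β := by
            rw [hG']
            simp only [SimpleGraph.deleteEdges_adj, Set.mem_singleton_iff]
            exact ⟨hadj, he⟩
          exact absurd ((hmemS β).mpr (hα.trans hadj'.reachable)) hβ
    have hsum := stmt7_sum_core A hAsymm mi mj bi bj heqi heqj S u v huS hvS hcut
    rw [hAadj u v huv, one_mul] at hsum
    have h1 : ∑ α ∈ S, mi α * bj α
        = if τj ∈ S then mi τj * bj τj else 0 := by
      by_cases hj : τj ∈ S
      · rw [if_pos hj]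
        apply Finset.sum_eq_single_of_mem τj hj
        intro b _ hb; rw [hbjz b hb, mul_zero]
      · rw [if_neg hj]
        apply Finset.sum_eq_zero
        intro b hb
        rw [hbjz b (fun h => hj (h ▸ hb)), mul_zero]
    have h2 : ∑ α ∈ S, mj α * bi α
        = if τi ∈ S then mj τi * bi τi else 0 := by
      by_cases hi : τi ∈ S
      · rw [if_pos hi]
        apply Finset.sum_eq_single_of_mem τi hi
        intro b _ hb; rw [hbiz b hb, mul_zero]
      · rw [if_neg hi]
        apply Finset.sum_eq_zero
        intro b hb
        rw [hbiz b (fun h => hi (h ▸ hb)), mul_zero]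
    rw [Finset.sum_sub_distrib, h1, h2] at hsum
    rw [← hsum]
    congr 1 <;> [skip; congr 1] <;> simp [hmemS] <;> rfl
  -- rules
  have ruleEq : ∀ u v : V, G.Adj u v →
      ¬ (G.deleteEdges {s(u, v)}).Reachable u τj →
      ¬ (G.deleteEdges {s(u, v)}).Reachable u τi → q u = q v := by
    intro u v huv h1 h2
    have hk := key u v huv
    rw [if_neg h1, if_neg h2, sub_zero] at hk
    rw [hq, hq, div_eq_div_iff (hmi u).ne' (hmi v).ne']
    linarith
  have ruleLt : ∀ u v : V, G.Adj u v →
      (G.deleteEdges {s(u, v)}).Reachable u τj →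
      (G.deleteEdges {s(u, v)}).Reachable v τi → q v < q u := by
    intro u v huv hj hi'
    have hi : ¬ (G.deleteEdges {s(u, v)}).Reachable u τi :=
      fun h => bridge u v huv (h.trans hi'.symm)
    have hk := key u v huv
    rw [if_pos hj, if_neg hi, sub_zero] at hk
    have hpos : 0 < mi τj * bj τj := mul_pos (hmi τj) ((hbj τj).2 rfl)
    rw [hq, hq, div_lt_div_iff₀ (hmi v) (hmi u)]
    linarith
  -- dichotomy
  have dichot : ∀ u v a : V,
      (G.deleteEdges {s(u, v)}).Reachable u a ∨ (G.deleteEdges {s(u, v)}).Reachable v a := by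
    intro u v a
    obtain ⟨W⟩ := hG.isConnected.preconnected a u
    rcases stmt7_reach_del (v := v) W with h | h
    · exact Or.inl h.symm
    · exact Or.inr h.symm
  -- off-path edge rule
  have ruleOff : ∀ u v : V, G.Adj u v → u ∉ P.support → v ∉ P.support → q u = q v := by
    intro u v huv hu hv
    have hPedge : ∀ e ∈ P.edges, e ∉ ({s(u, v)} : Set (Sym2 V)) := by
      intro e he hmem
      rw [Set.mem_singleton_iff] at hmem
      subst hmem
      exact hu (P.fst_mem_support_of_mem_edges he)
    have hreach : (G.deleteEdges {s(u, v)}).Reachable τj τi :=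
      ⟨P.toDeleteEdges {s(u, v)} hPedge⟩
    rcases dichot u v τj with h | h
    · have hiu : (G.deleteEdges {s(u, v)}).Reachable u τi := h.trans hreach
      have hjv : ¬ (G.deleteEdges {s(u, v)}).Reachable v τj :=
        fun h' => bridge u v huv (h.trans h'.symm)
      have hiv : ¬ (G.deleteEdges {s(u, v)}).Reachable v τi :=
        fun h' => bridge u v huv (hiu.trans h'.symm)
      refine (ruleEq v u huv.symm ?_ ?_).symm
      · rw [Sym2.eq_swap]; exact hjv
      · rw [Sym2.eq_swap]; exact hiv
    · have hvi : (G.deleteEdges {s(u, v)}).Reachable v τi := h.trans hreach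
      have hju : ¬ (G.deleteEdges {s(u, v)}).Reachable u τj :=
        fun h' => bridge u v huv (h'.trans h.symm)
      have hiu : ¬ (G.deleteEdges {s(u, v)}).Reachable u τi :=
        fun h' => bridge u v huv (h'.trans hvi.symm)
      exact ruleEq u v huv hju hiu
  -- part 2
  have part2 : ∀ (u v : V) (hu : u ∉ P.support) (hv : v ∉ P.support),
      (G.induce {x : V | x ∉ P.support}).Reachable ⟨u, hu⟩ ⟨v, hv⟩ → q u = q v := by
    suffices h : ∀ (a b : {x : V // x ∈ {x : V | x ∉ P.support}}),
        (G.induce {x : V | x ∉ P.support}).Reachable a b → q a.1 = q b.1 by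
      intro u v hu hv hr; exact h ⟨u, hu⟩ ⟨v, hv⟩ hr
    intro a b hr
    obtain ⟨W⟩ := hr
    induction W with
    | nil => rfl
    | @cons a c b h W ih =>
      have hadj : G.Adj a.1 c.1 := by
        simpa using h
      exact (ruleOff a.1 c.1 hadj a.2 c.2).trans ih
  refine ⟨?_, part2, ?_⟩
  · -- part 1
    have dartRule := stmt7_dart_rule (G := G) (q := q) (τj := τj) (τi := τi) ruleLt
    have hdarts : ∀ d ∈ P.darts, q d.snd < q d.fst := by
      have := dartRule τj SimpleGraph.Walk.nil P
      rw [SimpleGraph.Walk.nil_append] at this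
      exact this hP
    have chain : List.IsChain (fun x y => q y < q x) P.support :=
      stmt7_chain_of_darts P hdarts
    haveI : IsTrans V (fun x y => q y < q x) := ⟨fun a b c h1 h2 => h2.trans h1⟩
    have pairwise : List.Pairwise (fun x y => q y < q x) P.support :=
      List.isChain_iff_pairwise.mp chain
    intro α β hα hβ hlt
    have hα' : P.support.idxOf α < P.support.length := List.idxOf_lt_length_iff.mpr hα
    have hβ' : P.support.idxOf β < P.support.length := List.idxOf_lt_length_iff.mpr hβ
    have := List.pairwise_iff_getElem.mp pairwise _ _ hα' hβ' hlt
    rwa [List.getElem_idxOf hα', List.getElem_idxOf hβ'] at this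
  · -- part 3
    intro u v hu hv ρ hr hρ hadj
    have h2 : q u = q v := part2 u v hu hv hr
    have hadj' : G.Adj v ρ := hadj.symm
    have hPtrans : ∀ e ∈ P.edges, e ∉ ({s(v, ρ)} : Set (Sym2 V)) := by
      intro e he hmem
      rw [Set.mem_singleton_iff] at hmem
      subst hmem
      exact hv (P.fst_mem_support_of_mem_edges he)
    set P' := P.toDeleteEdges {s(v, ρ)} hPtrans with hP'
    have hρ' : ρ ∈ P'.support := by
      rw [hP']
      rw [SimpleGraph.Walk.support_transfer]
      exact hρ
    have hjρ : (G.deleteEdges {s(v, ρ)}).Reachable τj ρ := ⟨P'.takeUntil ρ hρ'⟩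
    have hiρ : (G.deleteEdges {s(v, ρ)}).Reachable ρ τi := ⟨P'.dropUntil ρ hρ'⟩
    have hbr : ¬ (G.deleteEdges {s(v, ρ)}).Reachable v ρ := bridge v ρ hadj'
    have hvj : ¬ (G.deleteEdges {s(v, ρ)}).Reachable v τj :=
      fun h => hbr (h.trans hjρ)
    have hvi : ¬ (G.deleteEdges {s(v, ρ)}).Reachable v τi :=
      fun h => hbr (h.trans hiρ.symm)
    have hvρ : q v = q ρ := ruleEq v ρ hadj' hvj hvi
    exact hvρ.symm.trans h2.symm
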